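/- Let X and Y be integrable real random variables. Then X is dominated by Y in the convex order (i.e., E[f(X)] ≤ E[f(Y)] for every convex f : ℝ → ℝ for which both expectations are finite) if and only if E[X] = E[Y] and E[(X − u)₊] ≤ E[(Y − u)₊] for all u ∈ ℝ. -/

import Mathlib

open MeasureTheory Set

open Filter Topology

set_option linter.unusedSectionVars false
set_option linter.unusedVariables false

lemma exists_subgradient0 {f : ℝ → ℝ} (hf : ConvexOn ℝ Set.univ f) (u : ℝ) :
    ∃ c : ℝ, ∀ x, f u + c * (x - u) ≤ f x := by
  set S : Set ℝ := (fun v => (f u - f v) / (u - v)) '' Iio u with hS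
  have hne : S.Nonempty := ⟨_, ⟨u - 1, by simp, rfl⟩⟩
  have hub : ∀ y > u, ∀ z ∈ S, z ≤ (f y - f u) / (y - u) := by
    rintro y hy z ⟨v, hv, rfl⟩
    exact hf.slope_mono_adjacent (mem_univ v) (mem_univ y) hv hy
  have hbdd : BddAbove S := ⟨(f (u+1) - f u) / (u + 1 - u), fun z hz => hub (u+1) (by linarith) z hz⟩
  refine ⟨sSup S, fun x => ?_⟩
  rcases lt_trichotomy x u with h | h | h
  · have hmem : (f u - f x) / (u - x) ∈ S := ⟨x, h, rfl⟩
    have := le_csSup hbdd hmem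
    have hux : (0:ℝ) < u - x := by linarith
    rw [div_le_iff₀ hux] at this
    nlinarith
  · simp [h]
  · have : sSup S ≤ (f x - f u) / (x - u) := csSup_le hne (hub x h)
    have hxu : (0:ℝ) < x - u := by linarith
    rw [le_div_iff₀ hxu] at this
    nlinarith

noncomputable def lineAt (f c : ℝ → ℝ) (u x : ℝ) : ℝ := f u + c u * (x - u)

noncomputable def crossPt (f c : ℝ → ℝ) (a b : ℝ) : ℝ :=
  (f b - f a + c a * a - c b * b) / (c a - c b)

noncomputable def approx (f c : ℝ → ℝ) (p : ℕ → ℝ) : ℕ → ℝ → ℝ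
  | 0, x => lineAt f c (p 0) x
  | (i+1), x => approx f c p i x
      + (c (p (i+1)) - c (p i)) * max (x - crossPt f c (p i) (p (i+1))) 0

section aux
variable {f c : ℝ → ℝ} (hc : ∀ u x, f u + c u * (x - u) ≤ f x)
include hc

lemma cmono : Monotone c := by
  intro u v huv
  rcases eq_or_lt_of_le huv with rfl | h
  · exact le_rfl
  · have h1 := hc u v
    have h2 := hc v u
    nlinarith

lemma line_le (u x : ℝ) : lineAt f c u x ≤ f x := hc u x

lemma line_eq_of_ceq {a b : ℝ} (h : c a = c b) : ∀ x, lineAt f c b x = lineAt f c a x := by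
  intro x
  have h1 := hc a b
  have h2 := hc b a
  simp only [lineAt]
  rw [← h] at h2 ⊢
  linarith

lemma line_cross {a b : ℝ} (h : c a ≠ c b) :
    ∀ x, lineAt f c b x = lineAt f c a x + (c b - c a) * (x - crossPt f c a b) := by
  intro x
  have hne : c a - c b ≠ 0 := sub_ne_zero.2 h
  simp only [lineAt, crossPt]
  field_simp
  ring

lemma cross_mem {a b : ℝ} (hab : a ≤ b) (h : c a < c b) :
    a ≤ crossPt f c a b ∧ crossPt f c a b ≤ b := by
  have hca := line_cross hc (ne_of_lt h) a
  have hcb := line_cross hc (ne_of_lt h) b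
  have h1 : lineAt f c b a ≤ f a := hc b a
  have h2 : lineAt f c a b ≤ f b := hc a b
  have e1 : lineAt f c a a = f a := by simp [lineAt]
  have e2 : lineAt f c b b = f b := by simp [lineAt]
  constructor
  · nlinarith
  · nlinarith

lemma approx_inv (p : ℕ → ℝ) (hp : Monotone p) (i : ℕ) :
    (∀ x, approx f c p i x ≤ f x) ∧ (∀ x, lineAt f c (p i) x ≤ approx f c p i x) ∧
      (∀ x, p i ≤ x → approx f c p i x = lineAt f c (p i) x) := by
  induction i with
  | zero => exact ⟨fun x => hc _ x, fun x => le_refl _, fun x _ => rfl⟩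
  | succ i ih =>
    obtain ⟨ihf, ihl, ihe⟩ := ih
    have hpi : p i ≤ p (i+1) := hp (Nat.le_succ i)
    have hci : c (p i) ≤ c (p (i+1)) := cmono hc hpi
    rcases eq_or_lt_of_le hci with heq | hlt
    · have hz : c (p (i+1)) - c (p i) = 0 := by linarith
      have hle : ∀ x, lineAt f c (p (i+1)) x = lineAt f c (p i) x := line_eq_of_ceq hc heq
      refine ⟨fun x => ?_, fun x => ?_, fun x hx => ?_⟩
      · simp only [approx, hz, zero_mul, add_zero]; exact ihf x
      · simp only [approx, hz, zero_mul, add_zero]; rw [hle]; exact ihl x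
      · simp only [approx, hz, zero_mul, add_zero]; rw [hle]; exact ihe x (le_trans hpi hx)
    · set w := crossPt f c (p i) (p (i+1)) with hw
      obtain ⟨hw1, hw2⟩ := cross_mem hc hpi hlt
      have hid := line_cross hc (ne_of_lt hlt)
      refine ⟨fun x => ?_, fun x => ?_, fun x hx => ?_⟩
      · rcases le_total x w with hxw | hxw
        · simp only [approx, ← hw, max_eq_right (by linarith : x - w ≤ 0), mul_zero, add_zero]
          exact ihf x
        · have hxe : approx f c p i x = lineAt f c (p i) x := ihe x (le_trans hw1 hxw)
          simp only [approx, ← hw, max_eq_left (by linarith : (0:ℝ) ≤ x - w), hxe]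
          rw [← hid x]
          exact hc _ x
      · rcases le_total x w with hxw | hxw
        · simp only [approx, ← hw, max_eq_right (by linarith : x - w ≤ 0), mul_zero, add_zero]
          have := ihl x
          have h2 := hid x
          nlinarith
        · have hxe : approx f c p i x = lineAt f c (p i) x := ihe x (le_trans hw1 hxw)
          simp only [approx, ← hw, max_eq_left (by linarith : (0:ℝ) ≤ x - w), hxe]
          rw [← hid x]
      · have hxw : w ≤ x := le_trans hw2 hx
        have hxe : approx f c p i x = lineAt f c (p i) x := ihe x (le_trans hw1 hxw)
        simp only [approx, ← hw, max_eq_left (by linarith : (0:ℝ) ≤ x - w), hxe]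
        rw [← hid x]

lemma approx_mono (p : ℕ → ℝ) (hp : Monotone p) (x : ℝ) :
    Monotone fun i => approx f c p i x := by
  apply monotone_nat_of_le_succ
  intro i
  have hci : c (p i) ≤ c (p (i+1)) := cmono hc (hp (Nat.le_succ i))
  have : (0:ℝ) ≤ (c (p (i+1)) - c (p i)) * max (x - crossPt f c (p i) (p (i+1))) 0 :=
    mul_nonneg (by linarith) (le_max_right _ _)
  simp only [approx]
  linarith

lemma line_le_approx (p : ℕ → ℝ) (hp : Monotone p) {j m : ℕ} (hjm : j ≤ m) (x : ℝ) :
    lineAt f c (p j) x ≤ approx f c p m x :=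
  le_trans ((approx_inv hc p hp j).2.1 x) (approx_mono hc p hp x hjm)

end aux

noncomputable def gridP (n i : ℕ) : ℝ := (i : ℝ) / ((n : ℝ) + 1) - ((n : ℝ) + 1)

def gridM (n : ℕ) : ℕ := 2 * (n + 1) ^ 2

lemma gridP_mono (n : ℕ) : Monotone (gridP n) := by
  intro i j hij
  have hN : (0:ℝ) < (n : ℝ) + 1 := by positivity
  have : (i:ℝ) ≤ (j:ℝ) := by exact_mod_cast hij
  unfold gridP
  gcongr

lemma gridP_zero_mem (n : ℕ) : gridP n ((n + 1) ^ 2) = 0 := by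
  unfold gridP
  have hN : ((n : ℝ) + 1) ≠ 0 := by positivity
  push_cast
  field_simp
  ring

section conv
variable {f c : ℝ → ℝ} (hc : ∀ u x, f u + c u * (x - u) ≤ f x)
include hc

lemma approx_grid_tendsto (x : ℝ) :
    Tendsto (fun n => approx f c (gridP n) (gridM n) x) atTop (𝓝 (f x)) := by
  set K := c (x + 1) - c (x - 1) with hK
  have hcm : Monotone c := cmono hc
  have hupper : ∀ n : ℕ, approx f c (gridP n) (gridM n) x ≤ f x :=
    fun n => (approx_inv hc (gridP n) (gridP_mono n) (gridM n)).1 x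
  have hlower : ∀ᶠ n : ℕ in atTop, f x - K * (1 / ((n:ℝ) + 1)) ≤
      approx f c (gridP n) (gridM n) x := by
    filter_upwards [eventually_ge_atTop ⌈|x|⌉₊] with n hn
    set N : ℝ := (n : ℝ) + 1 with hN
    have hN0 : (0:ℝ) < N := by positivity
    have hN1 : (1:ℝ) ≤ N := by rw [hN]; have : (0:ℝ) ≤ n := Nat.cast_nonneg n; linarith
    have hxN : |x| ≤ N := by
      calc |x| ≤ (⌈|x|⌉₊ : ℝ) := Nat.le_ceil _
        _ ≤ (n : ℝ) := by exact_mod_cast hn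
        _ ≤ N := by rw [hN]; linarith
    obtain ⟨hxN1, hxN2⟩ := abs_le.1 hxN
    have hr0 : (0:ℝ) ≤ (x + N) * N := mul_nonneg (by linarith) (le_of_lt hN0)
    set i : ℕ := ⌊(x + N) * N⌋₊ with hi
    have hi_le : (i : ℝ) ≤ (x + N) * N := Nat.floor_le hr0
    have hi_gt : (x + N) * N < (i : ℝ) + 1 := Nat.lt_floor_add_one _
    have hu_def : gridP n i = (i : ℝ) / N - N := rfl
    have hiN : (i : ℝ) / N * N = (i : ℝ) := by field_simp
    have hux : gridP n i ≤ x := by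
      rw [hu_def, sub_le_iff_le_add, div_le_iff₀ hN0]
      nlinarith
    have hxu : x - gridP n i ≤ 1 / N := by
      rw [hu_def, le_div_iff₀ hN0]
      nlinarith [hiN, hi_gt]
    have him : i ≤ gridM n := by
      have h2 : (i : ℝ) ≤ ((gridM n : ℕ) : ℝ) := by
        unfold gridM
        push_cast
        nlinarith
      exact_mod_cast h2
    set u : ℝ := gridP n i with hu
    have hxu1 : x - 1 ≤ u := by
      have : (1:ℝ)/N ≤ 1 := by rw [div_le_one hN0]; linarith
      linarith
    have hcu1 : c (x - 1) ≤ c u := hcm hxu1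
    have hcu2 : c u ≤ c x := hcm hux
    have hcx : c x ≤ c (x + 1) := hcm (by linarith)
    have hline : f x - K * (1 / N) ≤ lineAt f c u x := by
      have h1 := hc x u
      have hxu0 : 0 ≤ x - u := by linarith
      have h1N : 0 ≤ 1 / N := by positivity
      simp only [lineAt]
      nlinarith [mul_le_mul (by linarith : c x - c u ≤ K) hxu (by linarith) (by linarith : (0:ℝ) ≤ K)]
    exact le_trans hline (line_le_approx hc (gridP n) (gridP_mono n) him x)
  have hKlim : Tendsto (fun n : ℕ => f x - K * (1 / ((n:ℝ) + 1))) atTop (𝓝 (f x)) := by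
    have := tendsto_one_div_add_atTop_nhds_zero_nat (𝕜 := ℝ)
    have h2 : Tendsto (fun n : ℕ => f x - K * (1 / ((n:ℝ) + 1))) atTop (𝓝 (f x - K * 0)) :=
      (tendsto_const_nhds (x := f x)).sub (this.const_mul K)
    simpa using h2
  exact tendsto_of_tendsto_of_tendsto_of_le_of_le' hKlim tendsto_const_nhds hlower
    (Eventually.of_forall hupper)

end conv

/-- Stop-loss characterization of one-dimensional convex order: for integrable real random
variables `X, Y`, one has `X ⪯_cx Y` (i.e. `E[f(X)] ≤ E[f(Y)]` for every convex `f : ℝ → ℝ`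
for which both expectations are finite) if and only if `E[X] = E[Y]` and
`E[(X − u)₊] ≤ E[(Y − u)₊]` for every `u ∈ ℝ`. -/
theorem stmt2
    {Ω : Type*} [MeasurableSpace Ω] (μ : Measure Ω) [IsProbabilityMeasure μ]
    (X Y : Ω → ℝ) (hX : Integrable X μ) (hY : Integrable Y μ) :
    (∀ f : ℝ → ℝ, ConvexOn ℝ Set.univ f →
        Integrable (fun ω => f (X ω)) μ → Integrable (fun ω => f (Y ω)) μ →
        ∫ ω, f (X ω) ∂μ ≤ ∫ ω, f (Y ω) ∂μ) ↔
      ((∫ ω, X ω ∂μ = ∫ ω, Y ω ∂μ) ∧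
        ∀ u : ℝ, ∫ ω, max (X ω - u) 0 ∂μ ≤ ∫ ω, max (Y ω - u) 0 ∂μ) := by
  constructor
  · intro H
    constructor
    · have h1 := H (fun x => x) (convexOn_id convex_univ) hX hY
      have hneg : ConvexOn ℝ Set.univ (fun x : ℝ => -x) := by
        refine ⟨convex_univ, fun x _ y _ a b _ _ _ => ?_⟩
        simp only [smul_eq_mul]
        exact le_of_eq (by ring)
      have h2 := H (fun x => -x) hneg hX.neg hY.neg
      rw [integral_neg, integral_neg, neg_le_neg_iff] at h2
      exact le_antisymm h1 h2
    · intro u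
      have hconv : ConvexOn ℝ Set.univ (fun x : ℝ => max (x - u) 0) := by
        have h1 : ConvexOn ℝ Set.univ (fun x : ℝ => x - u) := by
          refine ⟨convex_univ, fun x _ y _ a b _ _ hab => ?_⟩
          simp only [smul_eq_mul]
          exact le_of_eq (by rw [show a*(x-u)+b*(y-u) = a*x+b*y-(a+b)*u from by ring, hab, one_mul])
        have h2 : ConvexOn ℝ Set.univ (fun _ : ℝ => (0:ℝ)) := convexOn_const 0 convex_univ
        have := h1.sup h2
        exact this
      exact H _ hconv (hX.sub (integrable_const u)).pos_part (hY.sub (integrable_const u)).pos_part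
  · rintro ⟨hEq, hSL⟩ f hfconv hfX hfY
    choose c hc using fun u => exists_subgradient0 hfconv u
    have hline_int : ∀ (u : ℝ) (Z : Ω → ℝ), Integrable Z μ →
        Integrable (fun ω => lineAt f c u (Z ω)) μ := by
      intro u Z hZ
      simp only [lineAt]
      exact (integrable_const (f u)).add ((hZ.sub (integrable_const u)).const_mul (c u))
    have hline_integral : ∀ (u : ℝ) (Z : Ω → ℝ), Integrable Z μ →
        ∫ ω, lineAt f c u (Z ω) ∂μ = f u + c u * ((∫ ω, Z ω ∂μ) - u) := by
      intro u Z hZ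
      simp only [lineAt]
      have hZu : Integrable (fun ω => Z ω - u) μ := hZ.sub (integrable_const u)
      rw [integral_add (integrable_const (f u)) (hZu.const_mul (c u)),
        integral_const, integral_const_mul, integral_sub hZ (integrable_const u), integral_const]
      simp [measure_univ]
    have main : ∀ (p : ℕ → ℝ), Monotone p → ∀ i : ℕ,
        Integrable (fun ω => approx f c p i (X ω)) μ ∧
        Integrable (fun ω => approx f c p i (Y ω)) μ ∧
        ∫ ω, approx f c p i (X ω) ∂μ ≤ ∫ ω, approx f c p i (Y ω) ∂μ := by
      intro p hp i
      induction i with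
      | zero =>
        refine ⟨?_, ?_, ?_⟩
        · simpa only [approx] using hline_int (p 0) X hX
        · simpa only [approx] using hline_int (p 0) Y hY
        · simp only [approx]
          rw [hline_integral (p 0) X hX, hline_integral (p 0) Y hY, hEq]
      | succ i ih =>
        obtain ⟨ihX, ihY, ihle⟩ := ih
        have hΔ : 0 ≤ c (p (i+1)) - c (p i) := sub_nonneg.2 (cmono hc (hp (Nat.le_succ i)))
        set w := crossPt f c (p i) (p (i+1)) with hwd
        have hIX : Integrable (fun ω => (c (p (i+1)) - c (p i)) * max (X ω - w) 0) μ :=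
          ((hX.sub (integrable_const w)).pos_part).const_mul _
        have hIY : Integrable (fun ω => (c (p (i+1)) - c (p i)) * max (Y ω - w) 0) μ :=
          ((hY.sub (integrable_const w)).pos_part).const_mul _
        refine ⟨?_, ?_, ?_⟩
        · exact ihX.add hIX
        · exact ihY.add hIY
        · simp only [approx]
          rw [integral_add ihX hIX, integral_add ihY hIY, integral_const_mul,
            integral_const_mul]
          exact add_le_add ihle (mul_le_mul_of_nonneg_left (hSL w) hΔ)
    have hlow : ∀ (n : ℕ) (z : ℝ), lineAt f c 0 z ≤ approx f c (gridP n) (gridM n) z := by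
      intro n z
      have h0 := gridP_zero_mem n
      have h1 := line_le_approx hc (gridP n) (gridP_mono n)
        (show (n+1)^2 ≤ gridM n by unfold gridM; omega) z
      rwa [h0] at h1
    have hup : ∀ (n : ℕ) (z : ℝ), approx f c (gridP n) (gridM n) z ≤ f z :=
      fun n z => (approx_inv hc (gridP n) (gridP_mono n) (gridM n)).1 z
    have hbdX : Integrable (fun ω => |f (X ω)| + |lineAt f c 0 (X ω)|) μ :=
      hfX.abs.add (hline_int 0 X hX).abs
    have hbdY : Integrable (fun ω => |f (Y ω)| + |lineAt f c 0 (Y ω)|) μ :=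
      hfY.abs.add (hline_int 0 Y hY).abs
    have habs : ∀ (n : ℕ) (z : ℝ), ‖approx f c (gridP n) (gridM n) z‖ ≤ |f z| + |lineAt f c 0 z| := by
      intro n z
      rw [Real.norm_eq_abs, abs_le]
      have h1 := hlow n z
      have h2 := hup n z
      have h3 := neg_abs_le (lineAt f c 0 z)
      have h4 := le_abs_self (f z)
      have h5 := abs_nonneg (lineAt f c 0 z)
      have h6 := abs_nonneg (f z)
      constructor <;> linarith
    have hTX : Tendsto (fun n => ∫ ω, approx f c (gridP n) (gridM n) (X ω) ∂μ) atTop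
        (𝓝 (∫ ω, f (X ω) ∂μ)) := by
      refine tendsto_integral_of_dominated_convergence _
        (fun n => (main _ (gridP_mono n) (gridM n)).1.aestronglyMeasurable) hbdX
        (fun n => Eventually.of_forall fun ω => habs n (X ω))
        (Eventually.of_forall fun ω => approx_grid_tendsto hc (X ω))
    have hTY : Tendsto (fun n => ∫ ω, approx f c (gridP n) (gridM n) (Y ω) ∂μ) atTop
        (𝓝 (∫ ω, f (Y ω) ∂μ)) := by
      refine tendsto_integral_of_dominated_convergence _
        (fun n => (main _ (gridP_mono n) (gridM n)).2.1.aestronglyMeasurable) hbdY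
        (fun n => Eventually.of_forall fun ω => habs n (Y ω))
        (Eventually.of_forall fun ω => approx_grid_tendsto hc (Y ω))
    exact le_of_tendsto_of_tendsto' hTX hTY fun n => (main _ (gridP_mono n) (gridM n)).2.2
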